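/- Let d = 1 and let μ be a translation invariant probability measure on X = ℕ^ℤ such that E_μ[η(0)] = 1 and such that (1/√n) Σ_{x=−n}^{n} (η(x) − 1) converges in distribution, as n → ∞, to a nondegenerate normal random variable. Then μ is not stabilizable. -/

import Mathlib

open MeasureTheory Filter Topology
open scoped ENNReal NNReal

/-- Sites of the lattice `ℤ^d`. -/
abbrev Site (d : ℕ) := Fin d → ℤ

/-- Sandpile configurations: `X = ℕ^{ℤ^d}`. -/
abbrev Config (d : ℕ) := Site d → ℕ

/-- Nearest-neighbor adjacency on `ℤ^d` (`ℓ¹`-distance one). -/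
def Adjacent {d : ℕ} (x y : Site d) : Prop :=
  (∑ i, (x i - y i).natAbs) = 1

/-- Sum of the values of `f` over the `2d` nearest neighbors of `y`. -/
def nbrSum {d : ℕ} {M : Type*} [AddCommMonoid M] (f : Site d → M) (y : Site d) : M :=
  ∑ i : Fin d, (f (Function.update y i (y i + 1)) + f (Function.update y i (y i - 1)))

/-- The left limit `T(t-, x, η)` of a (monotone, `ℕ`-valued) toppling function. -/
noncomputable def leftVal {d : ℕ} (T : NNReal → Site d → Config d → ℕ)
    (t : NNReal) (x : Site d) (η : Config d) : ℕ :=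
  sSup ((fun s => T s x η) '' Set.Iio t)

/-- A toppling procedure on `ℤ^d` (Definition 2.1): a measurable map
`T : [0,∞) × ℤ^d × X → ℕ` such that (a) `T(0,x,η) = 0`; (b) `t ↦ T(t,x,η)` is
right-continuous, nondecreasing, with jumps of size at most one; (c) finitely many
jumps in every finite time interval; (d) no infinite backward chain of topplings. -/
structure TopplingProcedure (d : ℕ) where
  T : NNReal → Site d → Config d → ℕ
  measurable : ∀ x : Site d, Measurable fun p : NNReal × Config d => T p.1 x p.2
  init : ∀ (x : Site d) (η : Config d), T 0 x η = 0
  mono : ∀ (x : Site d) (η : Config d), Monotone fun t => T t x η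
  jumpLe : ∀ (x : Site d) (η : Config d) (t : NNReal), T t x η ≤ leftVal T t x η + 1
  rightCont : ∀ (x : Site d) (η : Config d) (t : NNReal),
    ∃ ε : NNReal, 0 < ε ∧ ∀ s, t ≤ s → s < t + ε → T s x η = T t x η
  finJumps : ∀ (x : Site d) (η : Config d) (b : NNReal),
    {t : NNReal | t ≤ b ∧ leftVal T t x η < T t x η}.Finite
  noBackwardChain : ∀ η : Config d, ¬ ∃ (xs : ℕ → Site d) (ts : ℕ → NNReal),
    (∀ i, Adjacent (xs (i + 1)) (xs i)) ∧ StrictAnti ts ∧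
    (∀ i, leftVal T (ts i) (xs i) η < T (ts i) (xs i) η)

namespace TopplingProcedure

variable {d : ℕ}

/-- The configuration `η_t = η − Δ T(t,·,η)` at time `t` (as a `ℤ`-valued function). -/
def configAt (P : TopplingProcedure d) (η : Config d) (t : NNReal) (y : Site d) : ℤ :=
  (η y : ℤ) + nbrSum (fun x => (P.T t x η : ℤ)) y - 2 * d * (P.T t y η : ℤ)

/-- The configuration `η_{t-}` just before time `t`. -/
noncomputable def configLeft (P : TopplingProcedure d) (η : Config d) (t : NNReal)
    (y : Site d) : ℤ :=
  (η y : ℤ) + nbrSum (fun x => (leftVal P.T t x η : ℤ)) y - 2 * d * (leftVal P.T t y η : ℤ)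

/-- Site `x` topples at time `t` if `T(t,x,η) > T(t-,x,η)`. -/
def TopplesAt (P : TopplingProcedure d) (η : Config d) (x : Site d) (t : NNReal) : Prop :=
  leftVal P.T t x η < P.T t x η

/-- A toppling procedure is legal if only unstable sites are toppled:
whenever `x` topples at time `t > 0`, `η_{t-}(x) ≥ 2d`. -/
def Legal (P : TopplingProcedure d) : Prop :=
  ∀ (η : Config d) (t : NNReal) (x : Site d), 0 < t → P.TopplesAt η x t →
    (2 * d : ℤ) ≤ P.configLeft η t x

/-- `T` is finite for `η` if `T(∞,x,η) = sup_t T(t,x,η) < ∞` for every `x`. -/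
def FiniteFor (P : TopplingProcedure d) (η : Config d) : Prop :=
  ∀ x : Site d, BddAbove (Set.range fun t => P.T t x η)

/-- `T(∞,x,η) = sup_{t ≥ 0} T(t,x,η)`. -/
noncomputable def Tinf (P : TopplingProcedure d) (η : Config d) (x : Site d) : ℕ :=
  sSup (Set.range fun t => P.T t x η)

/-- The limit configuration `η_∞ = η − Δ T(∞,·,η)` (as a `ℤ`-valued function). -/
noncomputable def finalConfig (P : TopplingProcedure d) (η : Config d) (y : Site d) : ℤ :=
  (η y : ℤ) + nbrSum (fun x => (P.Tinf η x : ℤ)) y - 2 * d * (P.Tinf η y : ℤ)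

/-- `T` is stabilizing for `η` if it is finite for `η` and the limit configuration
`η_∞` is stable, i.e. takes values in `{0, 1, …, 2d−1}`. -/
def StabilizingFor (P : TopplingProcedure d) (η : Config d) : Prop :=
  P.FiniteFor η ∧ ∀ y : Site d, 0 ≤ P.finalConfig η y ∧ P.finalConfig η y ≤ 2 * d - 1

end TopplingProcedure

/-- A configuration `η` is stabilizable if there exists a stabilizing legal
toppling procedure for `η`. -/
def Stabilizable {d : ℕ} (η : Config d) : Prop :=
  ∃ P : TopplingProcedure d, P.Legal ∧ P.StabilizingFor η

/-- The shift of a configuration by a lattice vector `v`. -/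
def shiftConfig {d : ℕ} (v : Site d) (η : Config d) : Config d := fun x => η (x + v)

/-- A probability measure on `X` is translation invariant if it is invariant
under all shifts of `ℤ^d`. -/
def TransInvariant {d : ℕ} (μ : Measure (Config d)) : Prop :=
  ∀ v : Site d, Measure.map (shiftConfig v) μ = μ

/-- `μ` is a product measure: under `μ` the coordinates `(η(x))` are i.i.d. -/
def IsProductMeasure {d : ℕ} (μ : Measure (Config d)) : Prop :=
  ProbabilityTheory.iIndepFun
      (fun (x : Site d) (η : Config d) => η x) μ ∧
    ∀ x : Site d, Measure.map (fun η : Config d => η x) μ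
      = Measure.map (fun η : Config d => η (0 : Site d)) μ

/-- `x` belongs to the set `T_∞` of sites that topple during stabilization of `η`. -/
def ToppledInf {d : ℕ} (η : Config d) (x : Site d) : Prop :=
  ∃ P : TopplingProcedure d, P.Legal ∧ P.StabilizingFor η ∧ 0 < P.Tinf η x

/-- `x` belongs to `W_∞ = T_∞ ∪ {x : η_∞(x) > 0}`: `x` topples during stabilization
of `η`, or is nonempty after stabilization. -/
def InWinf {d : ℕ} (η : Config d) (x : Site d) : Prop :=
  ∃ P : TopplingProcedure d, P.Legal ∧ P.StabilizingFor η ∧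
    (0 < P.Tinf η x ∨ 0 < P.finalConfig η x)

/-- `y` lies in the cluster of `x` of the set `S`: `x` and `y` are joined by a
nearest-neighbor path inside `S`. -/
def InClusterOf {d : ℕ} (S : Site d → Prop) (x y : Site d) : Prop :=
  ∃ (k : ℕ) (f : ℕ → Site d), f 0 = x ∧ f k = y ∧ (∀ i ≤ k, S (f i)) ∧
    ∀ i < k, Adjacent (f i) (f (i + 1))



/-! ### Auxiliary material for the proof of Theorem 3.5 -/

section Aux

open ProbabilityTheory

/-- One step of parallel toppling in `d = 1`, tracked via toppling counts. -/
def pStep (a : ℤ → ℕ) (N : ℤ → ℕ) (z : ℤ) : ℕ :=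
  N z + if 2 ≤ (a z : ℤ) + N (z-1) + N (z+1) - 2 * N z then 1 else 0

/-- Toppling counts after `k` steps of parallel toppling. -/
def pIter (a : ℤ → ℕ) : ℕ → ℤ → ℕ
  | 0, _ => 0
  | k+1, z => pStep a (pIter a k) z

lemma pIter_mono (a : ℤ → ℕ) (z : ℤ) : Monotone fun k => pIter a k z := by
  apply monotone_nat_of_le_succ
  intro k
  simp only [pIter, pStep]
  exact Nat.le_add_right _ _

/-- Least action: parallel counts are dominated by any "stabilizing odometer". -/
lemma pIter_le (a q : ℤ → ℕ)
    (hq : ∀ z, (a z : ℤ) + q (z-1) + q (z+1) - 2 * q z ≤ 1) :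
    ∀ k z, pIter a k z ≤ q z := by
  intro k
  induction k with
  | zero => intro z; simp [pIter]
  | succ k ih =>
    intro z
    simp only [pIter, pStep]
    split_ifs with h
    · rcases lt_or_eq_of_le (ih z) with h' | h'
      · omega
      · exfalso
        have h1 := ih (z-1)
        have h2 := ih (z+1)
        have := hq z
        omega
    · simpa using ih z

lemma eventually_const_of_bdd' {B : ℕ} : ∀ {f : ℕ → ℕ}, Monotone f → (∀ k, f k ≤ B) →
    ∃ K, ∀ k ≥ K, f k = f K := by
  induction B with
  | zero => intro f hf hB; exact ⟨0, fun k _ => by have := hB k; have := hB 0; omega⟩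
  | succ B ih =>
    intro f hf hB
    by_cases h : ∃ k, f k = B + 1
    · obtain ⟨k, hk⟩ := h
      exact ⟨k, fun m hm => by have := hf hm; have := hB m; omega⟩
    · push_neg at h
      exact ih hf (fun k => by have := hB k; have := h k; omega)

/-- A monotone bounded sequence of naturals is eventually constant. -/
lemma eventually_const_of_bdd {f : ℕ → ℕ} (hf : Monotone f) {B : ℕ} (hB : ∀ k, f k ≤ B) :
    ∃ c, (∀ k, f k ≤ c) ∧ ∃ K, ∀ k ≥ K, f k = c := by
  obtain ⟨K, hK⟩ := eventually_const_of_bdd' hf hB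
  refine ⟨f K, fun k => ?_, K, hK⟩
  rcases le_total k K with h | h
  · exact hf h
  · exact le_of_eq (hK k h)

/-- Stability of the parallel-toppling limit. -/
lemma pLimit_stable (a : ℤ → ℕ) (u : ℤ → ℕ)
    (hu : ∀ z, ∃ K, ∀ k ≥ K, pIter a k z = u z) :
    ∀ z, (a z : ℤ) + u (z-1) + u (z+1) - 2 * u z ≤ 1 := by
  intro z
  obtain ⟨K1, hK1⟩ := hu (z-1)
  obtain ⟨K2, hK2⟩ := hu z
  obtain ⟨K3, hK3⟩ := hu (z+1)
  set K := max K1 (max K2 K3) with hK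
  have e1 : pIter a K (z-1) = u (z-1) := hK1 K (le_max_left _ _)
  have e2 : pIter a K z = u z := hK2 K (le_trans (le_max_left _ _) (le_max_right _ _))
  have e3 : pIter a K (z+1) = u (z+1) := hK3 K (le_trans (le_max_right _ _) (le_max_right _ _))
  by_contra h
  push_neg at h
  have hcond : 2 ≤ (a z : ℤ) + pIter a K (z-1) + pIter a K (z+1) - 2 * pIter a K z := by
    rw [e1, e2, e3]; omega
  have : pIter a (K+1) z = pIter a K z + 1 := by
    simp only [pIter, pStep, if_pos hcond]
  have e2' : pIter a (K+1) z = u z := hK2 (K+1) (by omega)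
  omega

/-- The telescoping bound on centered sums. -/
lemma sum_bound (a : ℤ → ℕ) (u : ℤ → ℕ)
    (hstab : ∀ z, (a z : ℤ) + u (z-1) + u (z+1) - 2 * u z ≤ 1) (n : ℕ) :
    ∑ x ∈ Finset.Icc (-(n:ℤ)) (n:ℤ), ((a x : ℤ) - 1) ≤ (u (-(n:ℤ)) : ℤ) + u (n:ℤ) := by
  have key : ∀ n : ℕ, ∑ x ∈ Finset.Icc (-(n:ℤ)) (n:ℤ), ((a x : ℤ) - 1)
      ≤ (u (-(n:ℤ)) : ℤ) + u (n:ℤ) - u (-(n:ℤ)-1) - u ((n:ℤ)+1) := by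
    intro n
    induction n with
    | zero =>
      simp only [Nat.cast_zero, neg_zero, Finset.Icc_self, Finset.sum_singleton]
      have := hstab 0
      push_cast
      push_cast at this
      linarith
    | succ n ih =>
      have hset : Finset.Icc (-((n:ℤ)+1)) ((n:ℤ)+1)
          = insert (-((n:ℤ)+1)) (insert ((n:ℤ)+1) (Finset.Icc (-(n:ℤ)) (n:ℤ))) := by
        ext x
        simp only [Finset.mem_Icc, Finset.mem_insert]
        omega
      have h1 : ((n:ℤ)+1) ∉ Finset.Icc (-(n:ℤ)) (n:ℤ) := by simp
      have h2 : (-((n:ℤ)+1)) ∉ insert ((n:ℤ)+1) (Finset.Icc (-(n:ℤ)) (n:ℤ)) := by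
        simp only [Finset.mem_insert, Finset.mem_Icc]
        omega
      push_cast
      rw [hset, Finset.sum_insert h2, Finset.sum_insert h1]
      have s1 := hstab (-((n:ℤ)+1))
      have s2 := hstab ((n:ℤ)+1)
      push_cast at ih
      have e2 : (-((n:ℤ)+1) + 1) = (-(n:ℤ)) := by ring
      rw [e2] at s1
      have e3 : ((n:ℤ)+1 - 1) = (n:ℤ) := by ring
      rw [e3] at s2
      have en : (-(n:ℤ) - 1) = -((n:ℤ)+1) := by ring
      rw [en] at ih
      linarith
  have := key n
  have h1 : (0:ℤ) ≤ u (-(n:ℤ)-1) := Int.ofNat_nonneg _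
  have h2 : (0:ℤ) ≤ u ((n:ℤ)+1) := Int.ofNat_nonneg _
  linarith

/-- Equivariance of parallel toppling under translations. -/
lemma pIter_shift (a : ℤ → ℕ) (t : ℤ) :
    ∀ k z, pIter (fun w => a (w + t)) k z = pIter a k (z + t) := by
  intro k
  induction k with
  | zero => intro z; simp [pIter]
  | succ k ih =>
    intro z
    simp only [pIter, pStep, ih]
    have e1 : z - 1 + t = z + t - 1 := by ring
    have e2 : z + 1 + t = z + t + 1 := by ring
    rw [e1, e2]

/-- The site of `ℤ ≃ ℤ^1` corresponding to `z`. -/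
def eSite (z : ℤ) : Site 1 := fun _ => z

/-- A configuration on `ℤ^1` as a function on `ℤ`. -/
def aOf (η : Config 1) : ℤ → ℕ := fun z => η (eSite z)

lemma update_site1 (y : Site 1) (i : Fin 1) (v : ℤ) : Function.update y i v = eSite v := by
  funext j
  rw [Subsingleton.elim j i]
  simp [eSite]

lemma nbrSum_site1 {M : Type*} [AddCommMonoid M] (f : Site 1 → M) (z : ℤ) :
    nbrSum f (eSite z) = f (eSite (z+1)) + f (eSite (z-1)) := by
  simp only [nbrSum, Fin.sum_univ_one, update_site1]
  rfl

lemma measurable_aOf (z : ℤ) : Measurable fun η : Config 1 => aOf η z :=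
  measurable_pi_apply _

lemma measurable_pIter (k : ℕ) (z : ℤ) : Measurable fun η : Config 1 => pIter (aOf η) k z := by
  induction k generalizing z with
  | zero => simp only [pIter]; exact measurable_const
  | succ k ih =>
    simp only [pIter, pStep]
    apply Measurable.add (ih z)
    have hexpr : Measurable fun η : Config 1 =>
        (aOf η z : ℤ) + pIter (aOf η) k (z-1) + pIter (aOf η) k (z+1)
          - 2 * pIter (aOf η) k z := by
      apply Measurable.sub
      apply Measurable.add (f := fun η : Config 1 => (aOf η z : ℤ) + pIter (aOf η) k (z-1))
      apply Measurable.add (f := fun η : Config 1 => (aOf η z : ℤ))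
      · exact measurable_from_top.comp (measurable_aOf z)
      · exact measurable_from_top.comp (ih (z-1))
      · exact measurable_from_top.comp (ih (z+1))
      · exact (measurable_from_top.comp (ih z)).const_mul 2
    have hset : MeasurableSet {η : Config 1 | 2 ≤ (aOf η z : ℤ) + pIter (aOf η) k (z-1)
        + pIter (aOf η) k (z+1) - 2 * pIter (aOf η) k z} :=
      hexpr (show MeasurableSet {m : ℤ | 2 ≤ m} from trivial)
    exact Measurable.ite hset measurable_const measurable_const

/-- For a stabilizable configuration, the parallel toppling counts converge to a
limiting odometer `u` whose final configuration is stable. -/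
lemma exists_odometer (η : Config 1) (h : Stabilizable η) :
    ∃ u : ℤ → ℕ, (∀ z M, ((∃ k, M ≤ pIter (aOf η) k z) ↔ M ≤ u z)) ∧
      (∀ z, (aOf η z : ℤ) + u (z-1) + u (z+1) - 2 * u z ≤ 1) := by
  obtain ⟨P, _hleg, hfin, hstable⟩ := h
  set q : ℤ → ℕ := fun z => P.Tinf η (eSite z) with hqdef
  have hq : ∀ z, (aOf η z : ℤ) + q (z-1) + q (z+1) - 2 * q z ≤ 1 := by
    intro z
    have hfc := (hstable (eSite z)).2
    simp only [TopplingProcedure.finalConfig, nbrSum_site1] at hfc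
    have : (η (eSite z) : ℤ) + ((q (z+1) : ℤ) + (q (z-1) : ℤ)) - 2 * 1 * (q z : ℤ)
        ≤ 2 * 1 - 1 := by
      simpa [hqdef] using hfc
    have ha : aOf η z = η (eSite z) := rfl
    rw [ha]
    linarith
  have hdom : ∀ k z, pIter (aOf η) k z ≤ q z := pIter_le (aOf η) q hq
  have hec : ∀ z, ∃ c, (∀ k, pIter (aOf η) k z ≤ c) ∧
      ∃ K, ∀ k ≥ K, pIter (aOf η) k z = c := by
    intro z
    exact eventually_const_of_bdd (pIter_mono (aOf η) z) (fun k => hdom k z)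
  choose u hu1 hu2 using hec
  refine ⟨u, fun z M => ⟨fun ⟨k, hk⟩ => le_trans hk (hu1 z k), fun hM => ?_⟩, ?_⟩
  · obtain ⟨K, hK⟩ := hu2 z
    exact ⟨K, by rw [hK K (le_refl K)]; exact hM⟩
  · exact pLimit_stable (aOf η) u hu2

/-- The event that site `z` eventually topples at least `M` times under
parallel toppling. -/
def Bset (M : ℕ) (z : ℤ) : Set (Config 1) := {η | ∃ k, M ≤ pIter (aOf η) k z}

lemma measurable_Bset (M : ℕ) (z : ℤ) : MeasurableSet (Bset M z) := by
  have : Bset M z = ⋃ k, (fun η : Config 1 => pIter (aOf η) k z) ⁻¹' {m | M ≤ m} := by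
    ext η; simp [Bset]
  rw [this]
  exact MeasurableSet.iUnion fun k =>
    (measurable_pIter k z) (show MeasurableSet {m : ℕ | M ≤ m} from trivial)

lemma Bset_anti (z : ℤ) : Antitone fun M => Bset M z := by
  intro M N hMN η ⟨k, hk⟩
  exact ⟨k, le_trans hMN hk⟩

lemma measurable_shiftConfig (v : Site 1) : Measurable (shiftConfig v) :=
  measurable_pi_lambda _ fun x => measurable_pi_apply (x + v)

lemma aOf_shift (η : Config 1) (z w : ℤ) :
    aOf (shiftConfig (eSite z) η) w = aOf η (w + z) := rfl

lemma Bset_shift (M : ℕ) (z : ℤ) :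
    Bset M z = shiftConfig (eSite z) ⁻¹' Bset M 0 := by
  ext η
  simp only [Bset, Set.mem_preimage, Set.mem_setOf_eq]
  constructor
  · rintro ⟨k, hk⟩
    refine ⟨k, ?_⟩
    have : pIter (aOf (shiftConfig (eSite z) η)) k 0 = pIter (aOf η) k (0 + z) := by
      have : aOf (shiftConfig (eSite z) η) = fun w => aOf η (w + z) := rfl
      rw [this, pIter_shift]
    rw [this, zero_add]
    exact hk
  · rintro ⟨k, hk⟩
    refine ⟨k, ?_⟩
    have he : pIter (aOf (shiftConfig (eSite z) η)) k 0 = pIter (aOf η) k (0 + z) := by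
      have : aOf (shiftConfig (eSite z) η) = fun w => aOf η (w + z) := rfl
      rw [this, pIter_shift]
    rw [he, zero_add] at hk
    exact hk

/-- The clamp test function `y ↦ min 1 (max 0 (y - 2))` as a bounded continuous function. -/
noncomputable def clampBCF : BoundedContinuousFunction ℝ ℝ :=
  BoundedContinuousFunction.mkOfBound
    ⟨fun y => min 1 (max 0 (y - 2)),
      Continuous.min continuous_const (Continuous.max continuous_const
        (continuous_id.sub continuous_const))⟩ 1 (by
      intro x y
      simp only [ContinuousMap.coe_mk]
      rw [Real.dist_eq, abs_le]
      have hx1 : min 1 (max 0 (x-2)) ≤ 1 := min_le_left _ _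
      have hx0 : (0:ℝ) ≤ min 1 (max 0 (x-2)) := le_min zero_le_one (le_max_left _ _)
      have hy1 : min 1 (max 0 (y-2)) ≤ 1 := min_le_left _ _
      have hy0 : (0:ℝ) ≤ min 1 (max 0 (y-2)) := le_min zero_le_one (le_max_left _ _)
      constructor <;> linarith)

lemma clampBCF_apply (y : ℝ) : clampBCF y = min 1 (max 0 (y - 2)) := rfl

lemma clampBCF_nonneg (y : ℝ) : 0 ≤ clampBCF y :=
  le_min zero_le_one (le_max_left _ _)

lemma clampBCF_le_one (y : ℝ) : clampBCF y ≤ 1 := min_le_left _ _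

lemma clampBCF_eq_zero {y : ℝ} (hy : y < 2) : clampBCF y = 0 := by
  rw [clampBCF_apply, max_eq_left (by linarith), min_eq_right zero_le_one]

lemma clampBCF_eq_one {y : ℝ} (hy : 3 ≤ y) : clampBCF y = 1 := by
  rw [clampBCF_apply, max_eq_right (by linarith), min_eq_left (by linarith)]

/-- The Gaussian measure puts positive mass on `[3, ∞)`. -/
lemma gaussian_tail_pos (m : ℝ) (v : ℝ≥0) (hv : v ≠ 0) :
    (gaussianReal m v) (Set.Ici (3:ℝ)) ≠ 0 := by
  rw [gaussianReal_apply m hv]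
  intro h0
  rw [setLIntegral_eq_zero_iff measurableSet_Ici (measurable_gaussianPDF m v)] at h0
  have : ∀ᵐ x : ℝ, x ∉ Set.Ici (3:ℝ) := by
    filter_upwards [h0] with x hx
    intro hxm
    have h1 := hx hxm
    have hp := gaussianPDFReal_pos m v x hv
    simp only [gaussianPDF] at h1
    rw [ENNReal.ofReal_eq_zero] at h1
    linarith
  have h2 := ae_iff.mp this
  simp only [not_not] at h2
  rw [show {x : ℝ | x ∈ Set.Ici (3:ℝ)} = Set.Ici (3:ℝ) from rfl, Real.volume_Ici] at h2
  exact (by simp : (⊤:ℝ≥0∞) ≠ 0) h2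

end Aux

/-- Theorem 3.5: in `d = 1`, a translation invariant probability measure with
`E_μ[η(0)] = 1` satisfying a central limit theorem (the normalized centered sums
`(1/√n) ∑_{x=-n}^n (η(x) − 1)` converge in distribution to a nondegenerate normal
random variable) is not stabilizable. -/
theorem statement10 (μ : Measure (Config 1)) [IsProbabilityMeasure μ]
    (hinv : TransInvariant μ)
    (hmean : ∫⁻ η, (η (0 : Site 1) : ℝ≥0∞) ∂μ = 1)
    (m : ℝ) (v : ℝ≥0) (hv : v ≠ 0)
    (hclt : ∀ f : BoundedContinuousFunction ℝ ℝ,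
      Tendsto (fun n : ℕ => ∫ η, f ((Real.sqrt n)⁻¹ *
          ∑ x ∈ Finset.Icc (-(n : ℤ)) (n : ℤ), ((η (fun _ => x) : ℝ) - 1)) ∂μ)
        atTop (𝓝 (∫ y, f y ∂(ProbabilityTheory.gaussianReal m v)))) :
    ¬ ∀ᵐ η ∂μ, Stabilizable η := by
  intro hstab
  classical
  set γ := ProbabilityTheory.gaussianReal m v with hγ
  -- the scaled centered sums
  set X : ℕ → Config 1 → ℝ := fun n η => (Real.sqrt n)⁻¹ *
      ∑ x ∈ Finset.Icc (-(n : ℤ)) (n : ℤ), ((η (fun _ => x) : ℝ) - 1) with hX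
  have hmeasX : ∀ n, Measurable (X n) := by
    intro n
    apply Measurable.const_mul
    apply Finset.measurable_sum
    intro x _
    exact (measurable_from_top.comp (measurable_pi_apply _)).sub measurable_const
  -- the events
  set S : ℕ → Set (Config 1) := fun n => {η | (2:ℝ) ≤ X n η} with hS
  have hSmeas : ∀ n, MeasurableSet (S n) := fun n =>
    (hmeasX n) (show MeasurableSet (Set.Ici (2:ℝ)) from measurableSet_Ici)
  set Mn : ℕ → ℕ := fun n => ⌈Real.sqrt n⌉₊ with hMn
  -- a.e. inclusion of the event in boundary events
  have hincl : ∀ n : ℕ, 1 ≤ n →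
      S n ≤ᵐ[μ] ((Bset (Mn n) (-(n:ℤ)) ∪ Bset (Mn n) (n:ℤ) : Set (Config 1))) := by
    intro n hn
    filter_upwards [hstab] with η hη hmem
    obtain ⟨u, hu1, hu2⟩ := exists_odometer η hη
    have hsq : (0:ℝ) < Real.sqrt n := Real.sqrt_pos.mpr (by exact_mod_cast hn)
    have hXval : 2 * Real.sqrt n ≤
        ∑ x ∈ Finset.Icc (-(n : ℤ)) (n : ℤ), ((η (fun _ => x) : ℝ) - 1) := by
      have h2 : (2:ℝ) ≤ X n η := hmem
      rw [hX] at h2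
      calc 2 * Real.sqrt n ≤ ((Real.sqrt n)⁻¹ *
            ∑ x ∈ Finset.Icc (-(n : ℤ)) (n : ℤ), ((η (fun _ => x) : ℝ) - 1)) * Real.sqrt n := by
            nlinarith
        _ = ∑ x ∈ Finset.Icc (-(n : ℤ)) (n : ℤ), ((η (fun _ => x) : ℝ) - 1) := by
            field_simp
    have hcast : ∑ x ∈ Finset.Icc (-(n : ℤ)) (n : ℤ), ((η (fun _ => x) : ℝ) - 1)
        = ((∑ x ∈ Finset.Icc (-(n : ℤ)) (n : ℤ), ((aOf η x : ℤ) - 1) : ℤ) : ℝ) := by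
      push_cast
      rfl
    have hZ := sum_bound (aOf η) u (hu2) n
    have hreal : 2 * Real.sqrt n ≤ (u (-(n:ℤ)) : ℝ) + (u (n:ℤ) : ℝ) := by
      rw [hcast] at hXval
      calc 2 * Real.sqrt n
          ≤ ((∑ x ∈ Finset.Icc (-(n : ℤ)) (n : ℤ), ((aOf η x : ℤ) - 1) : ℤ) : ℝ) := hXval
        _ ≤ (((u (-(n:ℤ)) : ℤ) + (u (n:ℤ)) : ℤ) : ℝ) := by exact_mod_cast hZ
        _ = (u (-(n:ℤ)) : ℝ) + (u (n:ℤ) : ℝ) := by push_cast; ring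
    have hone : Real.sqrt n ≤ (u (-(n:ℤ)) : ℝ) ∨ Real.sqrt n ≤ (u (n:ℤ) : ℝ) := by
      by_contra hc
      push_neg at hc
      linarith [hc.1, hc.2]
    rcases hone with hc | hc
    · exact Set.mem_union_left _ ((hu1 (-(n:ℤ)) (Mn n)).mpr (Nat.ceil_le.mpr hc))
    · exact Set.mem_union_right _ ((hu1 (n:ℤ) (Mn n)).mpr (Nat.ceil_le.mpr hc))
  -- translation invariance of Bset measures
  have hBeq : ∀ (M : ℕ) (z : ℤ), μ (Bset M z) = μ (Bset M 0) := by
    intro M z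
    rw [Bset_shift M z, ← Measure.map_apply (measurable_shiftConfig (eSite z))
      (measurable_Bset M 0), hinv (eSite z)]
  -- the tail of Bset M 0 vanishes
  have hnull : μ (⋂ M : ℕ, Bset M 0) = 0 := by
    rw [measure_eq_zero_iff_ae_notMem]
    filter_upwards [hstab] with η hη hmem
    obtain ⟨u, hu1, _⟩ := exists_odometer η hη
    have := Set.mem_iInter.mp hmem (u 0 + 1)
    have := (hu1 0 (u 0 + 1)).mp this
    omega
  have htail : Tendsto (fun M : ℕ => μ (Bset M 0)) atTop (𝓝 0) := by
    have := tendsto_measure_iInter_atTop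
      (fun M => (measurable_Bset M 0).nullMeasurableSet)
      (Bset_anti 0) ⟨0, measure_ne_top μ _⟩
    rwa [hnull] at this
  -- Mn tends to infinity
  have hMntop : Tendsto Mn atTop atTop := by
    apply Filter.tendsto_atTop_atTop.mpr
    intro b
    refine ⟨b * b, fun n hn => ?_⟩
    have h1 : (b:ℝ) ≤ Real.sqrt n := by
      rw [show (b:ℝ) = Real.sqrt (b*b) by rw [Real.sqrt_mul_self (by positivity)]]
      apply Real.sqrt_le_sqrt
      exact_mod_cast hn
    calc b = ⌈(b:ℝ)⌉₊ := by rw [Nat.ceil_natCast]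
      _ ≤ Mn n := Nat.ceil_le_ceil h1
  -- the squeeze
  have hg : Tendsto (fun n : ℕ => 2 * (μ (Bset (Mn n) 0)).toReal) atTop (𝓝 0) := by
    have h2 : Tendsto (fun n : ℕ => μ (Bset (Mn n) 0)) atTop (𝓝 0) := htail.comp hMntop
    have h3 : Tendsto (fun n : ℕ => (μ (Bset (Mn n) 0)).toReal) atTop (𝓝 0) := by
      simpa [Function.comp_def] using (ENNReal.tendsto_toReal (show (0:ℝ≥0∞) ≠ ⊤ by simp)).comp h2
    simpa using h3.const_mul 2
  have hFbound : ∀ᶠ n : ℕ in atTop,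
      (∫ η, clampBCF (X n η) ∂μ) ≤ 2 * (μ (Bset (Mn n) 0)).toReal := by
    filter_upwards [eventually_ge_atTop 1] with n hn
    have hint1 : Integrable (fun η => clampBCF (X n η)) μ := by
      apply Integrable.mono' (integrable_const (1:ℝ))
      · exact (clampBCF.continuous.measurable.comp (hmeasX n)).aestronglyMeasurable
      · refine ae_of_all _ fun η => ?_
        rw [Real.norm_eq_abs, abs_le]
        exact ⟨by linarith [clampBCF_nonneg (X n η)], clampBCF_le_one (X n η)⟩
    have hint2 : Integrable ((S n).indicator (fun _ => (1:ℝ))) μ :=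
      (integrable_const (1:ℝ)).indicator (hSmeas n)
    have hle : ∀ η, clampBCF (X n η) ≤ (S n).indicator (fun _ => (1:ℝ)) η := by
      intro η
      by_cases hη : η ∈ S n
      · rw [Set.indicator_of_mem hη]
        exact clampBCF_le_one _
      · rw [Set.indicator_of_notMem hη]
        have : X n η < 2 := by
          simp only [hS, Set.mem_setOf_eq, not_le] at hη
          exact hη
        rw [clampBCF_eq_zero this]
    calc (∫ η, clampBCF (X n η) ∂μ) ≤ ∫ η, (S n).indicator (fun _ => (1:ℝ)) η ∂μ :=
          integral_mono hint1 hint2 hle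
      _ = (μ (S n)).toReal := by
          rw [integral_indicator_const (1:ℝ) (hSmeas n)]; simp [Measure.real]
      _ ≤ 2 * (μ (Bset (Mn n) 0)).toReal := by
          have hμS : μ (S n) ≤ μ (Bset (Mn n) (-(n:ℤ))) + μ (Bset (Mn n) (n:ℤ)) :=
            le_trans (measure_mono_ae (hincl n hn)) (measure_union_le _ _)
          have : μ (S n) ≤ 2 * μ (Bset (Mn n) 0) := by
            rw [hBeq (Mn n) (-(n:ℤ)), hBeq (Mn n) (n:ℤ)] at hμS
            calc μ (S n) ≤ μ (Bset (Mn n) 0) + μ (Bset (Mn n) 0) := hμS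
              _ = 2 * μ (Bset (Mn n) 0) := by ring
          calc (μ (S n)).toReal ≤ (2 * μ (Bset (Mn n) 0)).toReal :=
                ENNReal.toReal_mono (by
                  exact ENNReal.mul_ne_top (by simp) (measure_ne_top μ _)) this
            _ = 2 * (μ (Bset (Mn n) 0)).toReal := by
                rw [ENNReal.toReal_mul]; simp
  have hFnonneg : ∀ᶠ n : ℕ in atTop, 0 ≤ ∫ η, clampBCF (X n η) ∂μ := by
    apply Eventually.of_forall
    intro n
    exact integral_nonneg fun η => clampBCF_nonneg _
  have hFzero : Tendsto (fun n : ℕ => ∫ η, clampBCF (X n η) ∂μ) atTop (𝓝 0) :=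
    squeeze_zero' hFnonneg hFbound hg
  -- the CLT limit
  have hcltf := hclt clampBCF
  have hXeq : (fun n : ℕ => ∫ η, clampBCF ((Real.sqrt n)⁻¹ *
      ∑ x ∈ Finset.Icc (-(n : ℤ)) (n : ℤ), ((η (fun _ => x) : ℝ) - 1)) ∂μ)
      = fun n : ℕ => ∫ η, clampBCF (X n η) ∂μ := rfl
  rw [hXeq] at hcltf
  have hlim : (∫ y, clampBCF y ∂γ) = 0 := tendsto_nhds_unique hcltf hFzero
  -- but the Gaussian integral is positive
  have hpos : (γ (Set.Ici (3:ℝ))).toReal ≤ ∫ y, clampBCF y ∂γ := by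
    have hle : ∀ y, (Set.Ici (3:ℝ)).indicator (fun _ => (1:ℝ)) y ≤ clampBCF y := by
      intro y
      by_cases hy : y ∈ Set.Ici (3:ℝ)
      · rw [Set.indicator_of_mem hy, clampBCF_eq_one hy]
      · rw [Set.indicator_of_notMem hy]
        exact clampBCF_nonneg y
    calc (γ (Set.Ici (3:ℝ))).toReal
        = ∫ y, (Set.Ici (3:ℝ)).indicator (fun _ => (1:ℝ)) y ∂γ := by
          rw [integral_indicator_const (1:ℝ) measurableSet_Ici]; simp [Measure.real]
      _ ≤ ∫ y, clampBCF y ∂γ :=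
          integral_mono ((integrable_const (1:ℝ)).indicator measurableSet_Ici)
            (clampBCF.integrable γ) hle
  rw [hlim] at hpos
  have hne := gaussian_tail_pos m v hv
  have : 0 < (γ (Set.Ici (3:ℝ))).toReal :=
    ENNReal.toReal_pos hne (measure_ne_top γ _)
  linarith
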